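/- Let (M_k)_{k≥1} be invertible real n×n matrices, (Ω_k)_{k≥0} real symmetric positive semi-definite n×n matrices, and P_0 a real symmetric positive semi-definite n×n matrix. Define P_{k+1} = M_{k+1}(I + P_kΩ_k)⁻¹P_kM_{k+1}ᵀ, M_{k:l} = M_k⋯M_{l+1}, and Γ_k = Σ_{l=0}^{k-1} M_{k:l}^{-ᵀ}Ω_lM_{k:l}^{-1}. If Γ_k is positive definite (the system is observable), then in the Loewner order P_k ≤ Γ_k⁻¹. Moreover, if L is positive definite and Γ_k ≥ L, then P_k ≤ L⁻¹. -/

import Mathlib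

open Matrix
open scoped MatrixOrder

/-- `Mres M l j` is the resolvent `M_{(l+j):l} = M_{l+j} ⋯ M_{l+1}`, so that
`M_{k:l} = Mres M l (k - l)` for `k ≥ l`, and `M_{k:k} = 1`. -/
def Mres {n : ℕ} (M : ℕ → Matrix (Fin n) (Fin n) ℝ) (l : ℕ) :
    ℕ → Matrix (Fin n) (Fin n) ℝ
  | 0 => 1
  | j + 1 => M (l + j + 1) * Mres M l j

/-- The information matrix `Γ_k = Σ_{l=0}^{k-1} M_{k:l}⁻ᵀ * Ω_l * M_{k:l}⁻¹`. -/
noncomputable def Gamma {n : ℕ} (M Ω : ℕ → Matrix (Fin n) (Fin n) ℝ) (k : ℕ) :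
    Matrix (Fin n) (Fin n) ℝ :=
  ∑ l ∈ Finset.range k, ((Mres M l (k - l))⁻¹)ᵀ * Ω l * (Mres M l (k - l))⁻¹

section aux
variable {n : ℕ}

lemma psd_conj {A : Matrix (Fin n) (Fin n) ℝ} (hA : A.PosSemidef)
    (B : Matrix (Fin n) (Fin n) ℝ) : (B * A * Bᵀ).PosSemidef := by
  simpa [conjTranspose_eq_transpose_of_trivial] using hA.mul_mul_conjTranspose_same B

lemma psd_conj' {A : Matrix (Fin n) (Fin n) ℝ} (hA : A.PosSemidef)
    (B : Matrix (Fin n) (Fin n) ℝ) : (Bᵀ * A * B).PosSemidef := by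
  simpa [conjTranspose_eq_transpose_of_trivial] using hA.conjTranspose_mul_mul_same B

lemma unit_one_add {Q G : Matrix (Fin n) (Fin n) ℝ} (hQ : Q.PosSemidef)
    (hG : G.PosSemidef) : IsUnit (1 + Q * G).det := by
  obtain ⟨S, hS⟩ := CStarAlgebra.nonneg_iff_eq_star_mul_self.mp hQ.nonneg
  rw [star_eq_conjTranspose, conjTranspose_eq_transpose_of_trivial] at hS
  have key : (1 + Q * G).det = (1 + S * G * Sᵀ).det := by
    rw [hS, mul_assoc, det_one_add_mul_comm]
  have hpsd : (S * G * Sᵀ).PosSemidef := psd_conj hG S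
  have hpd : (1 + S * G * Sᵀ).PosDef := Matrix.PosDef.one.add_posSemidef hpsd
  rw [key, isUnit_iff_ne_zero]
  exact hpd.det_pos.ne'
end aux

section gam
variable {n : ℕ} (M Ω : ℕ → Matrix (Fin n) (Fin n) ℝ)

lemma mres_succ (l k : ℕ) (h : l ≤ k) :
    Mres M l (k + 1 - l) = M (k + 1) * Mres M l (k - l) := by
  obtain ⟨j, rfl⟩ := Nat.exists_eq_add_of_le h
  have h1 : l + j + 1 - l = j + 1 := by omega
  have h2 : l + j - l = j := by omega
  rw [h1, h2]
  show M (l + j + 1) * Mres M l j = _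
  rfl

lemma gamma_psd (hΩ : ∀ k, (Ω k).PosSemidef) (k : ℕ) : (Gamma M Ω k).PosSemidef := by
  unfold Gamma
  induction' (Finset.range k) using Finset.cons_induction with a s ha ih
  · simpa using Matrix.PosSemidef.zero
  · rw [Finset.sum_cons]
    exact (psd_conj' (hΩ a) _).add ih

lemma gamma_succ (k : ℕ) :
    Gamma M Ω (k + 1)
      = ((M (k + 1))⁻¹)ᵀ * (Gamma M Ω k + Ω k) * (M (k + 1))⁻¹ := by
  unfold Gamma
  rw [Finset.sum_range_succ, mul_add, add_mul]
  congr 1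
  · rw [Finset.mul_sum, Finset.sum_mul]
    refine Finset.sum_congr rfl fun l hl => ?_
    have hlk : l ≤ k := Nat.le_of_lt_succ (Nat.lt_succ_of_lt (Finset.mem_range.mp hl))
    rw [mres_succ M l k hlk, Matrix.mul_inv_rev, transpose_mul]
    simp only [mul_assoc]
  · have h1 : k + 1 - k = 1 := by omega
    have h2 : Mres M k 1 = M (k + 1) * 1 := by show M (k + 0 + 1) * Mres M k 0 = _; rfl
    rw [h1, h2, mul_one]
end gam

lemma kf_invariant {n : ℕ} (M Ω : ℕ → Matrix (Fin n) (Fin n) ℝ)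
    (hM : ∀ k, 1 ≤ k → IsUnit (M k)) (hΩ : ∀ k, (Ω k).PosSemidef)
    (P : ℕ → Matrix (Fin n) (Fin n) ℝ) (hP0 : (P 0).PosSemidef)
    (hrec : ∀ k, P (k + 1) = M (k + 1) * (1 + P k * Ω k)⁻¹ * P k * (M (k + 1))ᵀ)
    (k : ℕ) :
    (1 + (Mres M 0 k * P 0 * (Mres M 0 k)ᵀ) * Gamma M Ω k) * P k
      = Mres M 0 k * P 0 * (Mres M 0 k)ᵀ := by
  induction k with
  | zero =>
      show (1 + (Mres M 0 0 * P 0 * (Mres M 0 0)ᵀ) * Gamma M Ω 0) * P 0 = _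
      simp [Mres, Gamma]
  | succ k ih =>
      set R := Mres M 0 k with hRdef
      set Q := R * P 0 * Rᵀ with hQdef
      set Γ := Gamma M Ω k with hΓdef
      set B := 1 + Q * Γ with hBdef
      set C := 1 + Q * (Γ + Ω k) with hCdef
      have hQ : Q.PosSemidef := psd_conj hP0 R
      have hΓp : Γ.PosSemidef := gamma_psd M Ω hΩ k
      have hBd : IsUnit B.det := unit_one_add hQ hΓp
      have hCd : IsUnit C.det := unit_one_add hQ (hΓp.add (hΩ k))
      have hMd : IsUnit (M (k+1)).det :=
        (Matrix.isUnit_iff_isUnit_det _).mp (hM (k+1) (by omega))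
      have hMM : M (k+1) * (M (k+1))⁻¹ = 1 := Matrix.mul_nonsing_inv _ hMd
      have hMiM : (M (k+1))⁻¹ * M (k+1) = 1 := Matrix.nonsing_inv_mul _ hMd
      have hPk : P k = B⁻¹ * Q := by
        rw [← ih, ← Matrix.mul_assoc, Matrix.nonsing_inv_mul _ hBd, one_mul]
      have hC : C = B + Q * Ω k := by rw [hCdef, hBdef, mul_add, add_assoc]
      have h1 : 1 + P k * Ω k = B⁻¹ * C := by
        rw [hC, mul_add, Matrix.nonsing_inv_mul _ hBd, hPk, Matrix.mul_assoc]
      have h2 : (1 + P k * Ω k)⁻¹ * P k = C⁻¹ * Q := by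
        rw [h1, Matrix.mul_inv_rev, Matrix.nonsing_inv_nonsing_inv _ hBd, hPk,
          Matrix.mul_assoc, ← Matrix.mul_assoc B, Matrix.mul_nonsing_inv _ hBd, one_mul]
      have hMres' : Mres M 0 (k+1) = M (k+1) * R := by
        show M (0 + k + 1) * Mres M 0 k = _
        rw [Nat.zero_add]
      have hQ' : Mres M 0 (k+1) * P 0 * (Mres M 0 (k+1))ᵀ = M (k+1) * Q * (M (k+1))ᵀ := by
        rw [hMres', transpose_mul, hQdef]
        simp only [Matrix.mul_assoc]
      have hTT : (M (k+1))ᵀ * ((M (k+1))⁻¹)ᵀ = 1 := by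
        rw [← transpose_mul, Matrix.nonsing_inv_mul _ hMd, transpose_one]
      have hP' : P (k+1) = M (k+1) * (C⁻¹ * Q) * (M (k+1))ᵀ := by
        rw [hrec k, Matrix.mul_assoc (M (k+1)), h2, ← Matrix.mul_assoc]
      have hΓ' : Gamma M Ω (k+1) = ((M (k+1))⁻¹)ᵀ * (Γ + Ω k) * (M (k+1))⁻¹ :=
        gamma_succ M Ω k
      have hQG : M (k+1) * Q * (M (k+1))ᵀ * Gamma M Ω (k+1)
          = M (k+1) * (Q * (Γ + Ω k)) * (M (k+1))⁻¹ := by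
        rw [hΓ']
        calc M (k+1) * Q * (M (k+1))ᵀ * (((M (k+1))⁻¹)ᵀ * (Γ + Ω k) * (M (k+1))⁻¹)
            = M (k+1) * (Q * (((M (k+1))ᵀ * ((M (k+1))⁻¹)ᵀ) * ((Γ + Ω k) * (M (k+1))⁻¹))) := by
              simp only [Matrix.mul_assoc]
          _ = M (k+1) * (Q * (Γ + Ω k)) * (M (k+1))⁻¹ := by
              rw [hTT, one_mul]
              simp only [Matrix.mul_assoc]
      have hBC : (1 : Matrix (Fin n) (Fin n) ℝ) + M (k+1) * (Q * (Γ + Ω k)) * (M (k+1))⁻¹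
          = M (k+1) * C * (M (k+1))⁻¹ := by
        rw [hCdef, mul_add (M (k+1)) 1 (Q * (Γ + Ω k)), mul_one, add_mul, hMM]
      rw [hQ', hQG, hP', hBC]
      calc (M (k+1) * C * (M (k+1))⁻¹) * (M (k+1) * (C⁻¹ * Q) * (M (k+1))ᵀ)
          = M (k+1) * (C * (((M (k+1))⁻¹ * M (k+1)) * (C⁻¹ * (Q * (M (k+1))ᵀ)))) := by
            simp only [Matrix.mul_assoc]
        _ = M (k+1) * ((C * C⁻¹) * (Q * (M (k+1))ᵀ)) := by
            rw [hMiM, one_mul]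
            simp only [Matrix.mul_assoc]
        _ = M (k+1) * Q * (M (k+1))ᵀ := by
            rw [Matrix.mul_nonsing_inv _ hCd, one_mul]
            simp only [hQdef, Matrix.mul_assoc]

lemma dp_shift {n : ℕ} (A : Matrix (Fin n) (Fin n) ℝ) (u v : Fin n → ℝ) :
    u ⬝ᵥ (Aᵀ *ᵥ v) = (A *ᵥ u) ⬝ᵥ v := by
  rw [dotProduct_mulVec, vecMul_transpose]

lemma psd_cs {n : ℕ} {A : Matrix (Fin n) (Fin n) ℝ} (hA : A.PosSemidef)
    (a b : Fin n → ℝ) :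
    (a ⬝ᵥ (A *ᵥ b)) ^ 2 ≤ (a ⬝ᵥ (A *ᵥ a)) * (b ⬝ᵥ (A *ᵥ b)) := by
  obtain ⟨B, hB⟩ := CStarAlgebra.nonneg_iff_eq_star_mul_self.mp hA.nonneg
  rw [star_eq_conjTranspose, conjTranspose_eq_transpose_of_trivial] at hB
  subst hB
  have key : ∀ u v : Fin n → ℝ, u ⬝ᵥ ((Bᵀ * B) *ᵥ v) = (B *ᵥ u) ⬝ᵥ (B *ᵥ v) := by
    intro u v
    rw [← mulVec_mulVec, dp_shift]
  rw [key, key, key]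
  have h := Finset.sum_mul_sq_le_sq_mul_sq Finset.univ (B *ᵥ a) (B *ᵥ b)
  simp only [dotProduct]
  simp only [← pow_two]
  exact h

lemma inv_antitone {n : ℕ} {L G : Matrix (Fin n) (Fin n) ℝ} (hL : L.PosDef) (hG : G.PosDef)
    (h : (G - L).PosSemidef) : (L⁻¹ - G⁻¹).PosSemidef := by
  have hLd : IsUnit L.det := (Matrix.isUnit_iff_isUnit_det _).mp hL.isUnit
  have hGd : IsUnit G.det := (Matrix.isUnit_iff_isUnit_det _).mp hG.isUnit
  have hLsym : Lᵀ = L := by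
    rw [← conjTranspose_eq_transpose_of_trivial]; exact hL.isHermitian
  refine PosSemidef.of_dotProduct_mulVec_nonneg ?_ ?_
  · exact (hL.inv.isHermitian).sub (hG.inv.isHermitian)
  · intro x
    simp only [star_trivial, sub_mulVec, dotProduct_sub]
    set y := G⁻¹ *ᵥ x with hy
    have hGy : G *ᵥ y = x := by
      rw [hy, mulVec_mulVec, Matrix.mul_nonsing_inv _ hGd, one_mulVec]
    have hLLix : L *ᵥ (L⁻¹ *ᵥ x) = x := by
      rw [mulVec_mulVec, Matrix.mul_nonsing_inv _ hLd, one_mulVec]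
    have CS := psd_cs hL.inv.posSemidef (L *ᵥ y) x
    have e1 : (L *ᵥ y) ⬝ᵥ (L⁻¹ *ᵥ x) = y ⬝ᵥ x := by
      rw [← dp_shift, hLsym, hLLix]  -- careful direction
    have e2 : L⁻¹ *ᵥ (L *ᵥ y) = y := by
      rw [mulVec_mulVec, Matrix.nonsing_inv_mul _ hLd, one_mulVec]
    have e3 : (L *ᵥ y) ⬝ᵥ y = y ⬝ᵥ (L *ᵥ y) := dotProduct_comm _ _
    rw [e1, e2, e3] at CS
    have hyL : y ⬝ᵥ (L *ᵥ y) ≤ y ⬝ᵥ (G *ᵥ y) := by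
      have h2 := h.dotProduct_mulVec_nonneg y
      simp only [star_trivial, sub_mulVec, dotProduct_sub] at h2
      linarith
    have hGyy : y ⬝ᵥ (G *ᵥ y) = y ⬝ᵥ x := by rw [hGy]
    have hyx : y ⬝ᵥ x = x ⬝ᵥ (G⁻¹ *ᵥ x) := by rw [dotProduct_comm, hy]
    have ht0 : 0 ≤ x ⬝ᵥ (G⁻¹ *ᵥ x) := by
      have := hG.inv.posSemidef.dotProduct_mulVec_nonneg x
      simpa only [star_trivial] using this
    have hs0 : 0 ≤ x ⬝ᵥ (L⁻¹ *ᵥ x) := by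
      have := hL.inv.posSemidef.dotProduct_mulVec_nonneg x
      simpa only [star_trivial] using this
    set t := x ⬝ᵥ (G⁻¹ *ᵥ x)
    set s := x ⬝ᵥ (L⁻¹ *ᵥ x)
    rw [hyx] at CS
    have hyLt : y ⬝ᵥ (L *ᵥ y) ≤ t := by rw [← hyx, ← hGyy]; exact hyL
    have hts : t ^ 2 ≤ t * s :=
      le_trans CS (mul_le_mul_of_nonneg_right hyLt hs0)
    rcases ht0.eq_or_lt with h0 | h0
    · linarith
    · nlinarith


/-- Observability bounds the Kalman filter covariance: if `Γ_k` is positive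
definite then `P_k ≤ Γ_k⁻¹` in the Loewner order; moreover, if `L` is positive
definite and `Γ_k ≥ L` then `P_k ≤ L⁻¹`. -/
theorem kf_observability_bound {n : ℕ}
    (M Ω : ℕ → Matrix (Fin n) (Fin n) ℝ)
    (hM : ∀ k, 1 ≤ k → IsUnit (M k)) (hΩ : ∀ k, (Ω k).PosSemidef)
    (P : ℕ → Matrix (Fin n) (Fin n) ℝ) (hP0 : (P 0).PosSemidef)
    (hrec : ∀ k, P (k + 1)
      = M (k + 1) * (1 + P k * Ω k)⁻¹ * P k * (M (k + 1))ᵀ)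
    (k : ℕ) (hΓ : (Gamma M Ω k).PosDef) :
    ((Gamma M Ω k)⁻¹ - P k).PosSemidef ∧
    ∀ L : Matrix (Fin n) (Fin n) ℝ, L.PosDef →
      (Gamma M Ω k - L).PosSemidef → (L⁻¹ - P k).PosSemidef := by
  set R := Mres M 0 k with hRdef
  set Q := R * P 0 * Rᵀ with hQdef
  set Γ := Gamma M Ω k with hΓdef
  set B := 1 + Q * Γ with hBdef
  have hQ : Q.PosSemidef := psd_conj hP0 R
  have hΓp : Γ.PosSemidef := hΓ.posSemidef
  have hBd : IsUnit B.det := unit_one_add hQ hΓp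
  have hΓd : IsUnit Γ.det := (Matrix.isUnit_iff_isUnit_det _).mp hΓ.isUnit
  have ih : B * P k = Q := kf_invariant M Ω hM hΩ P hP0 hrec k
  have hΓsym : Γᵀ = Γ := by
    rw [← conjTranspose_eq_transpose_of_trivial]; exact hΓ.isHermitian
  have hQsym : Qᵀ = Q := by
    rw [← conjTranspose_eq_transpose_of_trivial]; exact hQ.isHermitian
  have hBTd : IsUnit Bᵀ.det := by rwa [Matrix.det_transpose]
  have hBT : Bᵀ = 1 + Γ * Q := by
    rw [hBdef, transpose_add, transpose_one, transpose_mul, hΓsym, hQsym]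
  have key1 : B * (Γ⁻¹ - P k) = Γ⁻¹ := by
    rw [mul_sub, ih, hBdef, add_mul, one_mul, Matrix.mul_assoc,
      Matrix.mul_nonsing_inv _ hΓd, mul_one, add_sub_cancel_right]
  have key2 : Γ⁻¹ - P k = B⁻¹ * Γ⁻¹ := by
    conv_rhs => rw [← key1]
    rw [← Matrix.mul_assoc, Matrix.nonsing_inv_mul _ hBd, one_mul]
  have key3 : Γ⁻¹ * Bᵀ = Γ⁻¹ + Q := by
    rw [hBT, mul_add, mul_one, ← Matrix.mul_assoc, Matrix.nonsing_inv_mul _ hΓd, one_mul]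
  have key4 : Γ⁻¹ - P k = B⁻¹ * (Γ⁻¹ + Q) * (B⁻¹)ᵀ := by
    rw [key2, ← key3, Matrix.transpose_nonsing_inv, Matrix.mul_assoc, Matrix.mul_assoc,
      Matrix.mul_nonsing_inv _ hBTd, mul_one]
  have part1 : (Γ⁻¹ - P k).PosSemidef := by
    rw [key4]; exact psd_conj (hΓ.inv.posSemidef.add hQ) B⁻¹
  refine ⟨part1, fun L hLpd hLle => ?_⟩
  have h1 : (L⁻¹ - Γ⁻¹).PosSemidef := inv_antitone hLpd hΓ hLle
  have : L⁻¹ - P k = (L⁻¹ - Γ⁻¹) + (Γ⁻¹ - P k) := by rw [sub_add_sub_cancel]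
  rw [this]; exact h1.add part1
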